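/- arXiv:1604.03815 — 2 statements merged into one kernel-verified Lean document; each statement's English description precedes it below -/
import Mathlib

section
/- Let μ be a finite measure on the unit sphere S² ⊆ ℝ³ that is central symmetric (invariant under n ↦ -n) with μ(S²) = 1. Fix a unit vector n₀ and a measurable function g : S² → [0,1]. Suppose λ ∈ (0,1] satisfies ∫ [1_{n₀·n > λ}(n) + g(n)·1_{n₀·n = λ}(n)] dμ(n) = 1/2. Then the measure μ restricted to the set {n : 0 < n₀·n < λ} is zero, μ assigns measure zero weighted by (1 - g) to {n₀·n = λ}, and weighted by g to {n₀·n = 0}; consequently ∫ [1_{n₀·n > 0}(n) + g(n)·1_{n₀·n = 0}(n)] n dμ(n) = ∫ [1_{n₀·n > λ}(n) + g(n)·1_{n₀·n = λ}(n)] n dμ(n). -/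
open MeasureTheory RealInnerProductSpace

theorem stmt2 (μ : Measure (EuclideanSpace ℝ (Fin 3))) [IsProbabilityMeasure μ]
    (hsphere : ∀ᵐ n ∂μ, ‖n‖ = 1)
    (hsymm : Measure.map (fun n => -n) μ = μ)
    (n₀ : EuclideanSpace ℝ (Fin 3)) (hn₀ : ‖n₀‖ = 1)
    (g : EuclideanSpace ℝ (Fin 3) → ℝ) (hg : Measurable g) (hg01 : ∀ n, g n ∈ Set.Icc (0:ℝ) 1)
    (lam : ℝ) (hlam : lam ∈ Set.Ioc (0:ℝ) 1)
    (hmass : ∫ n, (Set.indicator {n | lam < ⟪n₀, n⟫} (fun _ => (1:ℝ)) n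
        + g n * Set.indicator {n | ⟪n₀, n⟫ = lam} (fun _ => (1:ℝ)) n) ∂μ = 1/2) :
    μ {n | 0 < ⟪n₀, n⟫ ∧ ⟪n₀, n⟫ < lam} = 0 ∧
    (∫ n, (1 - g n) * Set.indicator {n | ⟪n₀, n⟫ = lam} (fun _ => (1:ℝ)) n ∂μ) = 0 ∧
    (∫ n, g n * Set.indicator {n | ⟪n₀, n⟫ = 0} (fun _ => (1:ℝ)) n ∂μ) = 0 ∧
    (∫ n, (Set.indicator {n | 0 < ⟪n₀, n⟫} (fun _ => (1:ℝ)) n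
        + g n * Set.indicator {n | ⟪n₀, n⟫ = 0} (fun _ => (1:ℝ)) n) • n ∂μ)
      = ∫ n, (Set.indicator {n | lam < ⟪n₀, n⟫} (fun _ => (1:ℝ)) n
        + g n * Set.indicator {n | ⟪n₀, n⟫ = lam} (fun _ => (1:ℝ)) n) • n ∂μ := by
  have hfc : Continuous fun n : EuclideanSpace ℝ (Fin 3) => (⟪n₀, n⟫ : ℝ) :=
    continuous_const.inner continuous_id
  have hfm : Measurable fun n : EuclideanSpace ℝ (Fin 3) => (⟪n₀, n⟫ : ℝ) := hfc.measurable
  set A : Set (EuclideanSpace ℝ (Fin 3)) := {n | lam < ⟪n₀, n⟫} with hA_def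
  set B : Set (EuclideanSpace ℝ (Fin 3)) := {n | ⟪n₀, n⟫ = lam} with hB_def
  set Z : Set (EuclideanSpace ℝ (Fin 3)) := {n | ⟪n₀, n⟫ = (0:ℝ)} with hZ_def
  set P : Set (EuclideanSpace ℝ (Fin 3)) := {n | 0 < ⟪n₀, n⟫} with hP_def
  set N : Set (EuclideanSpace ℝ (Fin 3)) := {n | ⟪n₀, n⟫ < 0} with hN_def
  have hA : MeasurableSet A := measurableSet_lt measurable_const hfm
  have hB : MeasurableSet B := hfm (measurableSet_singleton lam)
  have hZ : MeasurableSet Z := hfm (measurableSet_singleton 0)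
  have hP : MeasurableSet P := measurableSet_lt measurable_const hfm
  have hN : MeasurableSet N := measurableSet_lt hfm measurable_const
  have hgbd : ∃ C, ∀ x, ‖g x‖ ≤ C := by
    refine ⟨1, fun x => ?_⟩
    rw [Real.norm_eq_abs, abs_le]
    exact ⟨le_trans (by norm_num) (hg01 x).1, (hg01 x).2⟩
  have intB : Integrable (B.indicator fun _ => (1:ℝ)) μ := (integrable_const 1).indicator hB
  have intA : Integrable (A.indicator fun _ => (1:ℝ)) μ := (integrable_const 1).indicator hA
  have intZ : Integrable (Z.indicator fun _ => (1:ℝ)) μ := (integrable_const 1).indicator hZ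
  have intgB : Integrable (fun n => g n * B.indicator (fun _ => (1:ℝ)) n) μ :=
    intB.bdd_mul hg.aestronglyMeasurable (Filter.Eventually.of_forall hgbd.choose_spec)
  have intgZ : Integrable (fun n => g n * Z.indicator (fun _ => (1:ℝ)) n) μ :=
    intZ.bdd_mul hg.aestronglyMeasurable (Filter.Eventually.of_forall hgbd.choose_spec)
  -- symmetry: μ N = μ P
  have hsym : μ N = μ P := by
    conv_rhs => rw [← hsymm]
    rw [Measure.map_apply (measurable_neg) hP]
    congr 1
    ext n
    simp only [Set.mem_preimage, hP_def, hN_def, Set.mem_setOf_eq, inner_neg_right]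
    constructor <;> intro h <;> linarith
  -- μ P ≤ 1/2
  have hPN : Disjoint P N := by
    rw [Set.disjoint_left]
    intro n hn1 hn2
    simp only [hP_def, hN_def, Set.mem_setOf_eq] at hn1 hn2
    linarith
  have hPle : μ P + μ N ≤ 1 := by
    rw [← measure_union hPN hN]
    exact (measure_mono (Set.subset_univ _)).trans_eq measure_univ
  -- translate hmass
  have h1A : ∫ n, A.indicator (fun _ => (1:ℝ)) n ∂μ = (μ A).toReal := integral_indicator_one hA
  have h1B : ∫ n, B.indicator (fun _ => (1:ℝ)) n ∂μ = (μ B).toReal := integral_indicator_one hB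
  have hmass' : (μ A).toReal + ∫ n, g n * B.indicator (fun _ => (1:ℝ)) n ∂μ = 1/2 := by
    rw [← h1A, ← integral_add intA intgB]
    exact hmass
  set I : ℝ := ∫ n, g n * B.indicator (fun _ => (1:ℝ)) n ∂μ with hI_def
  have hIleB : I ≤ (μ B).toReal := by
    rw [← h1B]
    refine integral_mono intgB intB fun n => ?_
    exact mul_le_of_le_one_left (Set.indicator_nonneg (fun _ _ => zero_le_one) n) (hg01 n).2
  -- A ∪ B = {λ ≤ x} ⊆ P
  have hAB : Disjoint A B := by
    rw [Set.disjoint_left]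
    intro n hn1 hn2
    simp only [hA_def, hB_def, Set.mem_setOf_eq] at hn1 hn2
    linarith
  have hABsub : A ∪ B ⊆ P := by
    intro n hn
    rcases hn with h | h
    · exact lt_trans hlam.1 h
    · simp only [hB_def, Set.mem_setOf_eq] at h
      show (0:ℝ) < ⟪n₀, n⟫
      rw [h]; exact hlam.1
  have hABeq : μ A + μ B = μ (A ∪ B) := (measure_union hAB hB).symm
  have habP : μ (A ∪ B) ≤ μ P := measure_mono hABsub
  -- real chain
  have hPhalf : (μ P).toReal ≤ 1/2 := by
    have h2 : μ P + μ P ≤ 1 := by rw [hsym] at hPle; exact hPle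
    have h3 := ENNReal.toReal_mono ENNReal.one_ne_top h2
    rw [ENNReal.toReal_add (measure_ne_top μ P) (measure_ne_top μ P), ENNReal.toReal_one] at h3
    linarith
  have hchain : (μ A).toReal + (μ B).toReal ≤ 1/2 := by
    rw [← ENNReal.toReal_add (measure_ne_top μ A) (measure_ne_top μ B), hABeq]
    exact le_trans (ENNReal.toReal_mono (measure_ne_top μ P) habP) hPhalf
  -- equalities
  have hIeqB : I = (μ B).toReal := by linarith
  have hABhalf : (μ (A ∪ B)).toReal = 1/2 := by
    have h1 : (μ (A ∪ B)).toReal ≤ (μ P).toReal := ENNReal.toReal_mono (measure_ne_top μ P) habP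
    have h2 : (μ A).toReal + (μ B).toReal = (μ (A ∪ B)).toReal := by
      rw [← ENNReal.toReal_add (measure_ne_top μ A) (measure_ne_top μ B), hABeq]
    linarith
  have hPeq : (μ P).toReal = 1/2 := by
    have h1 : (μ (A ∪ B)).toReal ≤ (μ P).toReal := ENNReal.toReal_mono (measure_ne_top μ P) habP
    linarith
  have hABP : μ (A ∪ B) = μ P := by
    rw [← ENNReal.toReal_eq_toReal_iff' (measure_ne_top μ _) (measure_ne_top μ _)]
    rw [hABhalf, hPeq]
  -- first conclusion
  have hmid : μ {n | 0 < ⟪n₀, n⟫ ∧ ⟪n₀, n⟫ < lam} = 0 := by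
    have hset : {n : EuclideanSpace ℝ (Fin 3) | 0 < ⟪n₀, n⟫ ∧ ⟪n₀, n⟫ < lam} = P \ (A ∪ B) := by
      ext n
      simp only [Set.mem_diff, Set.mem_union, hP_def, hA_def, hB_def, Set.mem_setOf_eq]
      constructor
      · rintro ⟨h1, h2⟩
        exact ⟨h1, by push_neg; exact ⟨by linarith, by linarith⟩⟩
      · rintro ⟨h1, h2⟩
        push_neg at h2
        exact ⟨h1, lt_of_le_of_ne h2.1 h2.2⟩
    rw [hset, measure_diff hABsub (hA.union hB).nullMeasurableSet (measure_ne_top μ _), hABP,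
      tsub_self]
  -- μ Z = 0
  have hPn : μ P = ENNReal.ofReal (1/2) := by
    rw [← ENNReal.ofReal_toReal (measure_ne_top μ P), hPeq]
  have hZ0 : μ Z = 0 := by
    have hun : μ (P ∪ N) = 1 := by
      rw [measure_union hPN hN, hsym, hPn, ← ENNReal.ofReal_add (by norm_num) (by norm_num)]
      norm_num
    have hcompl : μ ((P ∪ N)ᶜ) = 0 := by
      rw [measure_compl (hP.union hN) (measure_ne_top μ _), hun, measure_univ, tsub_self]
    refine measure_mono_null ?_ hcompl
    intro n hn
    simp only [Set.mem_compl_iff, Set.mem_union, hP_def, hN_def, hZ_def, Set.mem_setOf_eq] at *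
    push_neg
    constructor <;> simp [hn]
  -- second conclusion
  have hsub : (∫ n, (1 - g n) * B.indicator (fun _ => (1:ℝ)) n ∂μ) = 0 := by
    have : (fun n => (1 - g n) * B.indicator (fun _ => (1:ℝ)) n)
        = fun n => B.indicator (fun _ => (1:ℝ)) n - g n * B.indicator (fun _ => (1:ℝ)) n := by
      funext n; ring
    rw [this, integral_sub intB intgB, h1B, ← hI_def, hIeqB, sub_self]
  -- third conclusion
  have hindZ : ∀ᵐ n ∂μ, Z.indicator (fun _ => (1:ℝ)) n = 0 := by
    filter_upwards [measure_eq_zero_iff_ae_notMem.mp hZ0] with n hn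
    exact Set.indicator_of_notMem hn _
  have hgZ : (∫ n, g n * Z.indicator (fun _ => (1:ℝ)) n ∂μ) = 0 := by
    rw [integral_eq_zero_iff_of_nonneg_ae _ intgZ]
    · filter_upwards [hindZ] with n hn
      simp [hn]
    · filter_upwards [hindZ] with n hn
      simp [hn]
  -- fourth conclusion
  have hae1 : ∀ᵐ n ∂μ, ¬(0 < ⟪n₀, n⟫ ∧ ⟪n₀, n⟫ < lam) := measure_eq_zero_iff_ae_notMem.mp hmid
  have hae2 : ∀ᵐ n ∂μ, (⟪n₀, n⟫ : ℝ) ≠ 0 := measure_eq_zero_iff_ae_notMem.mp hZ0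
  have hae3 : ∀ᵐ n ∂μ, (1 - g n) * B.indicator (fun _ => (1:ℝ)) n = 0 := by
    have hnn : 0 ≤ᵐ[μ] fun n => (1 - g n) * B.indicator (fun _ => (1:ℝ)) n :=
      Filter.Eventually.of_forall fun n =>
        mul_nonneg (by linarith [(hg01 n).2]) (Set.indicator_nonneg (fun _ _ => zero_le_one) n)
    have hint : Integrable (fun n => (1 - g n) * B.indicator (fun _ => (1:ℝ)) n) μ := by
      have : (fun n => (1 - g n) * B.indicator (fun _ => (1:ℝ)) n)
          = fun n => B.indicator (fun _ => (1:ℝ)) n - g n * B.indicator (fun _ => (1:ℝ)) n := by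
        funext n; ring
      rw [this]; exact intB.sub intgB
    have := (integral_eq_zero_iff_of_nonneg_ae hnn hint).mp hsub
    exact this
  have hfinal : (∫ n, (P.indicator (fun _ => (1:ℝ)) n + g n * Z.indicator (fun _ => (1:ℝ)) n) • n ∂μ)
      = ∫ n, (A.indicator (fun _ => (1:ℝ)) n + g n * B.indicator (fun _ => (1:ℝ)) n) • n ∂μ := by
    refine integral_congr_ae ?_
    filter_upwards [hae1, hae2, hae3] with n h1 h2 h3
    have hZn : Z.indicator (fun _ => (1:ℝ)) n = 0 := Set.indicator_of_notMem (show n ∉ Z from h2) _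
    congr 1
    rw [hZn, mul_zero, add_zero]
    by_cases hp : (0:ℝ) < ⟪n₀, n⟫
    · have hge : lam ≤ ⟪n₀, n⟫ := by
        by_contra hlt
        exact h1 ⟨hp, lt_of_not_ge hlt⟩
      rcases lt_or_eq_of_le hge with hgt | heq
      · rw [Set.indicator_of_mem (show n ∈ P from hp), Set.indicator_of_mem (show n ∈ A from hgt),
          Set.indicator_of_notMem
          (show n ∉ B by simp only [hB_def, Set.mem_setOf_eq]; intro h; linarith),
          mul_zero, add_zero]
      · have hBn : n ∈ B := heq.symm
        rw [Set.indicator_of_mem hBn (fun _ => (1:ℝ))] at h3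
        rw [mul_one] at h3
        have hg1 : g n = 1 := by linarith
        rw [Set.indicator_of_mem (show n ∈ P from hp), Set.indicator_of_notMem
          (show n ∉ A by simp only [hA_def, Set.mem_setOf_eq]; intro h; linarith [heq]),
          Set.indicator_of_mem hBn, hg1]
        norm_num
    · have hneg : (⟪n₀, n⟫ : ℝ) < 0 := lt_of_le_of_ne (not_lt.mp hp) h2
      rw [Set.indicator_of_notMem (show n ∉ P from hp), Set.indicator_of_notMem
        (show n ∉ A by simp only [hA_def, Set.mem_setOf_eq]; intro h; linarith [hlam.1]),
        Set.indicator_of_notMem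
        (show n ∉ B by simp only [hB_def, Set.mem_setOf_eq]; intro h; nlinarith [hlam.1]),
        mul_zero, add_zero]
  exact ⟨hmid, hsub, hgZ, hfinal⟩
end

section
/- Let T be an invertible symmetric 3×3 real matrix, J(n) = N_T/(nᵀT⁻²n)² the normalized density on S², and define b(n₀) = ∫_{S²} J(n) 1_{n₀·n > 0} n dS(n). Then the quantity n₀ᵀ b(n₀) / √(n₀ᵀ T² n₀) is independent of the unit vector n₀ and equals π N_T |det T|. -/
open MeasureTheory Real Set Filter Matrix
open scoped RealInnerProductSpace

noncomputable abbrev E3 := EuclideanSpace ℝ (Fin 3)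

section Lemmas



-- (1) radial integral
lemma radial_integral (φ : ℝ → ℝ) :
    ∫ r : Ioi (0:ℝ), φ r ∂(Measure.volumeIoiPow 2) = ∫ r in Ioi (0:ℝ), r^2 * φ r := by
  simp only [Measure.volumeIoiPow, ENNReal.ofReal]
  rw [integral_withDensity_eq_integral_smul
    ((measurable_subtype_coe.pow_const _).real_toNNReal),
    integral_subtype_comap measurableSet_Ioi (fun a : ℝ => Real.toNNReal (a ^ 2) • φ a),
    setIntegral_congr_fun measurableSet_Ioi (g := fun r : ℝ => r^2 * φ r) fun x hx => ?_]
  rw [NNReal.smul_def, Real.coe_toNNReal _ (pow_nonneg hx.out.le _), smul_eq_mul]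

-- (3) polar
lemma polar (G : E3 → ℝ) :
    ∫ x, G x = ∫ p : (Metric.sphere (0:E3) 1) × (Ioi (0:ℝ)),
      G (p.2.1 • p.1.1) ∂((volume : Measure E3).toSphere.prod (Measure.volumeIoiPow 2)) := by
  have h3 : Module.finrank ℝ E3 = 3 := finrank_euclideanSpace_fin
  have hmp := (volume : Measure E3).measurePreserving_homeomorphUnitSphereProd
  rw [h3] at hmp
  have key := hmp.integral_comp (Homeomorph.measurableEmbedding _)
    (fun p : (Metric.sphere (0:E3) 1) × (Ioi (0:ℝ)) => G (p.2.1 • p.1.1))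
  have lhs_eq : (∫ (x : ({0}ᶜ : Set E3)),
      G (((homeomorphUnitSphereProd E3) x).2.1 • ((homeomorphUnitSphereProd E3) x).1.1)
        ∂Measure.comap Subtype.val volume) = ∫ x, G x := by
    have : ∀ x : ({0}ᶜ : Set E3),
        G (((homeomorphUnitSphereProd E3) x).2.1 • ((homeomorphUnitSphereProd E3) x).1.1)
          = G x.1 := by
      intro x
      simp only [homeomorphUnitSphereProd_apply_fst_coe, homeomorphUnitSphereProd_apply_snd_coe]
      rw [smul_inv_smul₀ (norm_ne_zero_iff.2 x.2)]
    simp_rw [this]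
    rw [integral_subtype_comap (measurableSet_singleton (0:E3)).compl (fun x => G x),
      restrict_compl_singleton]
  rw [← lhs_eq, key]


lemma cubic_gauss_int {a : ℝ} (ha : 0 < a) :
    IntegrableOn (fun r : ℝ => r^3 * Real.exp (-a * r^2)) (Ioi 0) := by
  have := integrableOn_rpow_mul_exp_neg_mul_sq ha (s := 3) (by norm_num)
  apply this.congr_fun ?_ measurableSet_Ioi
  intro x hx
  simp only
  rw [show (3:ℝ) = ((3:ℕ):ℝ) by norm_num, Real.rpow_natCast]

-- ∫_{Ioi 0} r^3 exp(-a r²) = 1/(2a²)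
lemma cubic_gauss {a : ℝ} (ha : 0 < a) :
    ∫ r in Ioi (0:ℝ), r^3 * Real.exp (-a * r^2) = 1/(2*a^2) := by
  have hderiv : ∀ x ∈ Ici (0:ℝ), HasDerivAt
      (fun r : ℝ => -(a * r^2 + 1)/(2*a^2) * Real.exp (-a * r^2))
      (x^3 * Real.exp (-a * x^2)) x := by
    intro x _
    have h1 : HasDerivAt (fun r : ℝ => -(a * r^2 + 1)/(2*a^2)) (-(a*(2*x))/(2*a^2)) x := by
      have : HasDerivAt (fun r : ℝ => a * r^2 + 1) (a*(2*x)) x := by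
        simpa using ((hasDerivAt_pow 2 x).const_mul a).add_const 1
      simpa using (this.neg.div_const (2*a^2))
    have h2 : HasDerivAt (fun r : ℝ => Real.exp (-a * r^2)) (Real.exp (-a*x^2) * (-a*(2*x))) x := by
      have : HasDerivAt (fun r : ℝ => -a * r^2) (-a*(2*x)) x := by
        simpa using (hasDerivAt_pow 2 x).const_mul (-a)
      simpa using this.exp
    have := h1.fun_mul h2
    refine this.congr_deriv ?_
    field_simp
    ring
  have htend : Tendsto (fun r : ℝ => -(a * r^2 + 1)/(2*a^2) * Real.exp (-a * r^2)) atTop (nhds 0) := by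
    have hu : Tendsto (fun r : ℝ => a * r^2) atTop atTop :=
      (tendsto_pow_atTop (by norm_num)).const_mul_atTop ha
    have hf : Tendsto (fun x : ℝ => -(x + 1)/(2*a^2) * Real.exp (-x)) atTop (nhds 0) := by
      have h1 : Tendsto (fun x : ℝ => x * Real.exp (-x)) atTop (nhds 0) := by
        simpa using Real.tendsto_pow_mul_exp_neg_atTop_nhds_zero 1
      have h2 : Tendsto (fun x : ℝ => Real.exp (-x)) atTop (nhds 0) :=
        Real.tendsto_exp_neg_atTop_nhds_zero
      have h3 := (h1.add h2).const_mul (-(1/(2*a^2)))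
      have h4 : Tendsto (fun x : ℝ => -(x + 1)/(2*a^2) * Real.exp (-x)) atTop
          (nhds (-(1/(2*a^2)) * (0 + 0))) := Tendsto.congr (fun x => by ring) h3
      simpa using h4
    have := hf.comp hu
    refine this.congr fun r => ?_
    simp [Function.comp]
  have := integral_Ioi_of_hasDerivAt_of_tendsto' hderiv (cubic_gauss_int ha) htend
  rw [this]
  norm_num
  field_simp

lemma lin_gauss : ∫ r in Ioi (0:ℝ), r * Real.exp (-r^2) = 1/2 := by
  have hderiv : ∀ x ∈ Ici (0:ℝ), HasDerivAt
      (fun r : ℝ => -Real.exp (-r^2)/2) (x * Real.exp (-x^2)) x := by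
    intro x _
    have h2 : HasDerivAt (fun r : ℝ => Real.exp (-r^2)) (Real.exp (-x^2) * (-(2*x))) x := by
      have : HasDerivAt (fun r : ℝ => -r^2) (-(2*x)) x := by
        simpa using (hasDerivAt_pow 2 x).fun_neg
      simpa using this.exp
    have := (h2.fun_neg.div_const 2)
    refine this.congr_deriv ?_
    field_simp
  have hint : IntegrableOn (fun r : ℝ => r * Real.exp (-r^2)) (Ioi 0) := by
    have := (integrable_mul_exp_neg_mul_sq (b := 1) one_pos).integrableOn (s := Ioi 0)
    simpa using this
  have htend : Tendsto (fun r : ℝ => -Real.exp (-r^2)/2) atTop (nhds 0) := by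
    have h2 : Tendsto (fun x : ℝ => Real.exp (-x)) atTop (nhds 0) :=
      Real.tendsto_exp_neg_atTop_nhds_zero
    have hu : Tendsto (fun r : ℝ => r^2) atTop atTop := tendsto_pow_atTop (by norm_num)
    have h3 : Tendsto (fun r : ℝ => -Real.exp (-r^2)/2) atTop (nhds (-0/2)) :=
      Tendsto.congr (fun r => by simp [Function.comp]) ((h2.comp hu).neg.div_const 2)
    simpa using h3
  have := integral_Ioi_of_hasDerivAt_of_tendsto' hderiv hint htend
  rw [this]
  norm_num

-- (4)
lemma gauss_pos_part : ∫ t : ℝ, max t 0 * Real.exp (-t^2) = 1/2 := by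
  have hint : Integrable (fun t : ℝ => max t 0 * Real.exp (-t^2)) := by
    apply ((integrable_mul_exp_neg_mul_sq (b := 1) one_pos).abs).mono'
    · exact ((measurable_id.max measurable_const).mul (by fun_prop)).aestronglyMeasurable
    · refine Eventually.of_forall fun t => ?_
      simp only [norm_mul, Real.norm_eq_abs, abs_mul, abs_of_nonneg (Real.exp_pos _).le,
        neg_mul, one_mul]
      have hm : max t 0 ≤ |t| := max_le (le_abs_self t) (abs_nonneg t)
      calc |max t 0| * Real.exp (-t^2) = max t 0 * Real.exp (-t^2) := by
            rw [abs_of_nonneg (le_max_right t 0)]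
        _ ≤ |t| * Real.exp (-t^2) := by gcongr

  rw [← integral_add_compl measurableSet_Ioi hint, compl_Ioi]
  have h1 : ∫ t in Ioi (0:ℝ), max t 0 * Real.exp (-t^2) = ∫ t in Ioi (0:ℝ), t * Real.exp (-t^2) :=
    setIntegral_congr_fun measurableSet_Ioi fun t ht => by rw [max_eq_left ht.out.le]
  have h2 : ∫ t in Iic (0:ℝ), max t 0 * Real.exp (-t^2) = 0 := by
    rw [setIntegral_congr_fun measurableSet_Iic
      (g := fun _ : ℝ => (0:ℝ)) fun t ht => by rw [max_eq_right ht.out, zero_mul]]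
    simp
  rw [h1, h2, lin_gauss]
  norm_num




lemma gauss_e0 : ∫ x : E3, max (⟪EuclideanSpace.single (0 : Fin 3) (1:ℝ), x⟫) 0
    * Real.exp (-‖x‖^2) = π/2 := by
  have hmp := (EuclideanSpace.volume_preserving_symm_measurableEquiv_toLp (Fin 3)).symm
  rw [← hmp.integral_comp (MeasurableEquiv.measurableEmbedding _)]
  have heq : ∀ y : Fin 3 → ℝ,
      max (⟪EuclideanSpace.single (0 : Fin 3) (1:ℝ),
        ((MeasurableEquiv.toLp 2 (Fin 3 → ℝ)) y : E3)⟫) 0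
        * Real.exp (-‖((MeasurableEquiv.toLp 2 (Fin 3 → ℝ)) y : E3)‖^2)
      = ∏ i : Fin 3, (if i = 0 then (fun t : ℝ => max t 0 * Real.exp (-t^2))
          else fun t : ℝ => Real.exp (-t^2)) (y i) := by
    intro y
    have h1 : ⟪EuclideanSpace.single (0 : Fin 3) (1:ℝ),
        ((MeasurableEquiv.toLp 2 (Fin 3 → ℝ)) y : E3)⟫ = y 0 := by
      rw [EuclideanSpace.inner_single_left]
      simp
    have h2 : ‖((MeasurableEquiv.toLp 2 (Fin 3 → ℝ)) y : E3)‖^2 = ∑ i, (y i)^2 := by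
      rw [← real_inner_self_eq_norm_sq, PiLp.inner_apply]
      simp [sq]
    rw [h1, h2, Fin.prod_univ_three]
    simp only [Fin.isValue, if_true, if_neg (by decide : (1 : Fin 3) ≠ 0),
      if_neg (by decide : (2 : Fin 3) ≠ 0), reduceIte]
    rw [Fin.sum_univ_three]
    rw [show -((y 0)^2 + (y 1)^2 + (y 2)^2) = -(y 0)^2 + (-(y 1)^2 + -(y 2)^2) by ring,
      Real.exp_add, Real.exp_add]
    ring
  simp_rw [MeasurableEquiv.symm_symm, heq]
  rw [MeasureTheory.integral_fintype_prod_volume_eq_prod (𝕜 := ℝ) (ι := Fin 3)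
    (fun i => (if i = 0 then (fun t : ℝ => max t 0 * Real.exp (-t^2))
          else fun t : ℝ => Real.exp (-t^2)))]
  rw [Fin.prod_univ_three]
  simp only [Fin.isValue, if_true, if_neg (by decide : (1 : Fin 3) ≠ 0),
    if_neg (by decide : (2 : Fin 3) ≠ 0), reduceIte]
  have hg : ∫ t : ℝ, Real.exp (-t^2) = Real.sqrt π := by
    have := integral_gaussian (1:ℝ)
    simpa using this
  rw [gauss_pos_part, hg, mul_assoc, Real.mul_self_sqrt Real.pi_nonneg]
  ring

lemma appA (v : E3) : ∫ x : E3, max ⟪v, x⟫ 0 * Real.exp (-‖x‖^2) = π/2 * ‖v‖ := by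
  rcases eq_or_ne v 0 with rfl | hv
  · simp
  · set e0 : E3 := EuclideanSpace.single (0 : Fin 3) (1:ℝ) with he0
    set u : E3 := ‖v‖⁻¹ • v with hu
    have hnv : ‖v‖ ≠ 0 := norm_ne_zero_iff.2 hv
    have hu1 : ‖u‖ = 1 := by
      rw [hu, norm_smul, norm_inv, norm_norm, inv_mul_cancel₀ hnv]
    have he1 : ‖e0‖ = 1 := by
      rw [he0, EuclideanSpace.norm_single, norm_one]
    set R : E3 ≃ₗᵢ[ℝ] E3 := Submodule.reflection (ℝ ∙ (e0 - u))ᗮ with hR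
    have hRe0 : R e0 = u := Submodule.reflection_sub (by rw [he1, hu1])
    have hmp : MeasurePreserving R volume volume := R.measurePreserving
    rw [← hmp.integral_comp R.toHomeomorph.measurableEmbedding]
    have heq : ∀ x : E3, max ⟪v, R x⟫ 0 * Real.exp (-‖R x‖^2)
        = ‖v‖ * (max ⟪e0, x⟫ 0 * Real.exp (-‖x‖^2)) := by
      intro x
      have h1 : ⟪v, R x⟫ = ‖v‖ * ⟪e0, x⟫ := by
        have hv' : v = ‖v‖ • u := by rw [hu, smul_smul, mul_inv_cancel₀ hnv, one_smul]
        calc ⟪v, R x⟫ = ‖v‖ * ⟪u, R x⟫ := by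
              nth_rewrite 1 [hv']; rw [real_inner_smul_left]
          _ = ‖v‖ * ⟪e0, x⟫ := by rw [← hRe0, LinearIsometryEquiv.inner_map_map]
      have h2 : max (‖v‖ * ⟪e0, x⟫) 0 = ‖v‖ * max ⟪e0, x⟫ 0 := by
        rw [mul_max_of_nonneg _ _ (norm_nonneg v), mul_zero]
      rw [h1, R.norm_map, h2]
      ring
    simp_rw [heq]
    rw [integral_const_mul, gauss_e0]
    ring



lemma det_toEuclideanLin (T : Matrix (Fin 3) (Fin 3) ℝ) :
    LinearMap.det (Matrix.toEuclideanLin T) = T.det := by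
  rw [show (Matrix.toEuclideanLin T : E3 →ₗ[ℝ] E3)
    = Matrix.toLin (PiLp.basisFun 2 ℝ (Fin 3)) (PiLp.basisFun 2 ℝ (Fin 3)) T from
      congrFun (congrArg _ Matrix.toEuclideanLin_eq_toLin) T]
  exact LinearMap.det_toLin _ _

lemma inner_toEuclideanLin_symm (T : Matrix (Fin 3) (Fin 3) ℝ) (hTsymm : T.IsSymm)
    (x y : E3) : ⟪x, Matrix.toEuclideanLin T y⟫ = ⟪Matrix.toEuclideanLin T x, y⟫ := by
  have h : Tᴴ = T := by rwa [conjTranspose_eq_transpose_of_trivial]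
  have hadj : LinearMap.adjoint (Matrix.toEuclideanLin T) = Matrix.toEuclideanLin T := by
    rw [← Matrix.toEuclideanLin_conjTranspose_eq_adjoint, h]
  rw [← hadj, LinearMap.adjoint_inner_left, hadj]

lemma toEuclideanLin_mul (A B : Matrix (Fin 3) (Fin 3) ℝ) (x : E3) :
    Matrix.toEuclideanLin (A * B) x = Matrix.toEuclideanLin A (Matrix.toEuclideanLin B x) := by
  simp [Matrix.toEuclideanLin_apply, Matrix.mulVec_mulVec]

lemma cov (M : E3 →ₗ[ℝ] E3) (hdet : LinearMap.det M ≠ 0) (g : E3 → ℝ)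
    (hg : AEStronglyMeasurable g (volume : Measure E3)) :
    ∫ x, g x = |LinearMap.det M| * ∫ y, g (M y) := by
  have hmap := Measure.map_linearMap_addHaar_eq_smul_addHaar (volume : Measure E3) hdet
  have h1 : ∫ y, g (M y) = ∫ x, g x ∂((volume : Measure E3).map M) := by
    rw [integral_map]
    · exact (M.continuous_of_finiteDimensional.aemeasurable)
    · rw [hmap]
      exact hg.mono_ac (Measure.smul_absolutelyContinuous)
  rw [h1, hmap, integral_smul_measure]
  rw [ENNReal.toReal_ofReal (abs_nonneg _), abs_inv, smul_eq_mul, ← mul_assoc,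
    mul_inv_cancel₀ (by simpa using hdet), one_mul]


lemma radial_integrable {φ : ℝ → ℝ} (h : IntegrableOn (fun r => r^2 * φ r) (Ioi (0:ℝ))) :
    Integrable (fun r : Ioi (0:ℝ) => φ r.1) (Measure.volumeIoiPow 2) := by
  have h' : Integrable (fun r : Ioi (0:ℝ) => r.1^2 * φ r.1)
      (Measure.comap Subtype.val volume) := by
    have h2 : Integrable (fun r : ℝ => r^2 * φ r) (volume.restrict (Ioi 0)) := h
    rw [← map_comap_subtype_coe measurableSet_Ioi] at h2
    exact ((MeasurableEmbedding.subtype_coe measurableSet_Ioi).integrable_map_iff).mp h2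
  rw [Measure.volumeIoiPow]
  rw [integrable_withDensity_iff (by fun_prop) (Eventually.of_forall fun x => ENNReal.ofReal_lt_top)]
  apply h'.congr
  refine Eventually.of_forall fun x => ?_
  show (x:ℝ)^2 * φ x = φ x * (ENNReal.ofReal ((x:ℝ)^2)).toReal
  rw [ENNReal.toReal_ofReal (by positivity)]
  ring

lemma integrable_of_continuous_compact {X : Type*} [MeasurableSpace X] [TopologicalSpace X]
    [OpensMeasurableSpace X] [CompactSpace X] [Nonempty X] (μ : Measure X) [IsFiniteMeasure μ]
    (f : X → ℝ) (hf : Continuous f) : Integrable f μ := by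
  obtain ⟨x, -, hx⟩ := isCompact_univ.exists_isMaxOn univ_nonempty hf.norm.continuousOn
  exact (integrable_const ‖f x‖).mono' hf.aestronglyMeasurable
    (Eventually.of_forall fun y => hx (mem_univ y))
end Lemmas

set_option maxHeartbeats 1000000 in
theorem stmt8 (T : Matrix (Fin 3) (Fin 3) ℝ) (hT : IsUnit T.det) (hTsymm : T.IsSymm)
    (N : ℝ) (hN : 0 < N)
    (J : Metric.sphere (0 : EuclideanSpace ℝ (Fin 3)) 1 → ℝ)
    (hJ : ∀ n, J n = N / (⟪(n : EuclideanSpace ℝ (Fin 3)),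
        Matrix.toEuclideanLin (T⁻¹ * T⁻¹) (n : EuclideanSpace ℝ (Fin 3))⟫)^2)
    (hnorm : ∫ n, J n ∂(volume : Measure (EuclideanSpace ℝ (Fin 3))).toSphere = 1)
    (b : Metric.sphere (0 : EuclideanSpace ℝ (Fin 3)) 1 → EuclideanSpace ℝ (Fin 3))
    (hb : ∀ n₀, b n₀ = ∫ n, (Set.indicator
          {p : Metric.sphere (0 : EuclideanSpace ℝ (Fin 3)) 1 |
            0 < ⟪(n₀ : EuclideanSpace ℝ (Fin 3)), (p : EuclideanSpace ℝ (Fin 3))⟫}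
          J n) • (n : EuclideanSpace ℝ (Fin 3))
        ∂(volume : Measure (EuclideanSpace ℝ (Fin 3))).toSphere) :
    ∀ n₀ : Metric.sphere (0 : EuclideanSpace ℝ (Fin 3)) 1,
      ⟪(n₀ : EuclideanSpace ℝ (Fin 3)), b n₀⟫ /
        Real.sqrt (⟪(n₀ : EuclideanSpace ℝ (Fin 3)),
          Matrix.toEuclideanLin (T * T) (n₀ : EuclideanSpace ℝ (Fin 3))⟫)
      = Real.pi * N * |T.det| := by
  intro n₀
  have hne : Nonempty (Metric.sphere (0 : E3) 1) := ⟨n₀⟩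
  have hdet : T.det ≠ 0 := hT.ne_zero
  set n₀' : E3 := (n₀ : E3) with hn₀'
  set Tl : E3 →ₗ[ℝ] E3 := Matrix.toEuclideanLin T with hTldef
  set Til : E3 →ₗ[ℝ] E3 := Matrix.toEuclideanLin T⁻¹ with hTildef
  have hTlc : Continuous Tl := Tl.continuous_of_finiteDimensional
  have hTilc : Continuous Til := Til.continuous_of_finiteDimensional
  have hTinv_symm : (T⁻¹).IsSymm := by
    rw [Matrix.IsSymm, Matrix.transpose_nonsing_inv, hTsymm.eq]
  have hTilTl : ∀ x : E3, Til (Tl x) = x := by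
    intro x
    rw [hTildef, hTldef, ← toEuclideanLin_mul, Matrix.nonsing_inv_mul T hT]
    simp [Matrix.toEuclideanLin_apply]
  have hTlTil : ∀ x : E3, Tl (Til x) = x := by
    intro x
    rw [hTildef, hTldef, ← toEuclideanLin_mul, Matrix.mul_nonsing_inv T hT]
    simp [Matrix.toEuclideanLin_apply]
  have hn₀norm : ‖n₀'‖ = 1 := by
    have := n₀.2
    rwa [mem_sphere_zero_iff_norm] at this
  have hn₀0 : n₀' ≠ 0 := by
    intro h; rw [h, norm_zero] at hn₀norm; norm_num at hn₀norm
  set v : E3 := Tl n₀' with hvdef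
  have hv0 : v ≠ 0 := by
    intro h
    have := hTilTl n₀'
    rw [← hvdef] at this  -- this : Til v = n₀'
    rw [h, map_zero] at this
    exact hn₀0 this.symm
  have hvnorm : ‖v‖ ≠ 0 := norm_ne_zero_iff.2 hv0
  -- Til is nonzero on the sphere
  have hTiln0 : ∀ n : Metric.sphere (0 : E3) 1, Til (n : E3) ≠ 0 := by
    intro n h
    have h1 : Tl (Til (n : E3)) = (n : E3) := hTlTil _
    rw [h, map_zero] at h1
    have := mem_sphere_zero_iff_norm.mp n.2
    rw [← h1, norm_zero] at this
    norm_num at this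
  -- inner products as norms
  have hnormTil : ∀ x : E3, ⟪x, Matrix.toEuclideanLin (T⁻¹ * T⁻¹) x⟫ = ‖Til x‖^2 := by
    intro x
    rw [toEuclideanLin_mul, inner_toEuclideanLin_symm T⁻¹ hTinv_symm,
      real_inner_self_eq_norm_sq]
  have hJval : ∀ n : Metric.sphere (0 : E3) 1, J n = N / ‖Til (n : E3)‖^4 := by
    intro n
    rw [hJ n, hnormTil]
    norm_num [← pow_mul]
  have hTnorm : Real.sqrt (⟪n₀', Matrix.toEuclideanLin (T * T) n₀'⟫) = ‖v‖ := by
    have h1 : ⟪n₀', Matrix.toEuclideanLin (T * T) n₀'⟫ = ‖v‖^2 := by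
      rw [toEuclideanLin_mul, inner_toEuclideanLin_symm T hTsymm,
        real_inner_self_eq_norm_sq]
    rw [h1, Real.sqrt_sq (norm_nonneg _)]
  -- continuity and integrability of J
  have hJcont : Continuous J := by
    have : J = fun n : Metric.sphere (0 : E3) 1 => N / ‖Til (n : E3)‖^4 := funext hJval
    rw [this]
    exact continuous_const.div
      (((hTilc.comp continuous_subtype_val).norm.pow 4))
      (fun n => pow_ne_zero 4 (norm_ne_zero_iff.2 (hTiln0 n)))
  have hJint : Integrable J ((volume : Measure E3).toSphere) :=
    integrable_of_continuous_compact _ J hJcont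
  -- the indicator set
  set S : Set (Metric.sphere (0 : E3) 1) := {p | 0 < ⟪n₀', (p : E3)⟫} with hSdef
  have hSm : MeasurableSet S :=
    (isOpen_lt continuous_const (continuous_const.inner continuous_subtype_val)).measurableSet
  have hbint : Integrable (fun n : Metric.sphere (0 : E3) 1 =>
      (S.indicator J n) • (n : E3)) ((volume : Measure E3).toSphere) := by
    apply hJint.abs.mono'
    · exact ((hJcont.stronglyMeasurable.indicator hSm).smul
        continuous_subtype_val.stronglyMeasurable).aestronglyMeasurable
    · refine Eventually.of_forall fun n => ?_
      rw [norm_smul, mem_sphere_zero_iff_norm.mp n.2, mul_one]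
      by_cases h : n ∈ S
      · rw [Set.indicator_of_mem (show n ∈ S from h) J]
        exact le_of_eq (Real.norm_eq_abs _)
      · rw [Set.indicator_of_notMem (show n ∉ S from h) J]
        simp [abs_nonneg]
  -- step 1 : the inner product with b
  have hInner : ⟪n₀', b n₀⟫ =
      ∫ n, J n * max ⟪n₀', (n : E3)⟫ 0 ∂((volume : Measure E3).toSphere) := by
    rw [hb n₀, ← integral_inner hbint n₀']
    apply integral_congr_ae
    refine Eventually.of_forall fun n => ?_
    show ⟪n₀', (S.indicator J n) • (n : E3)⟫ = J n * max ⟪n₀', (n : E3)⟫ 0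
    rw [real_inner_smul_right]
    by_cases h : 0 < ⟪n₀', (n : E3)⟫
    · rw [Set.indicator_of_mem (show n ∈ S from h) J, max_eq_left h.le]
    · rw [Set.indicator_of_notMem (show n ∉ S from h) J, max_eq_right (not_lt.mp h),
        mul_zero, zero_mul]
  -- the auxiliary function
  set G2 : E3 → ℝ := fun x => N * (max ⟪n₀', x⟫ 0 * Real.exp (-‖Til x‖^2)) with hG2def
  have hG2c : Continuous G2 := by
    apply continuous_const.mul
    exact ((continuous_const.inner continuous_id).max continuous_const).mul
      (((hTilc.norm.pow 2).neg).rexp)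
  -- lower bound on ‖Til n‖ on the sphere
  obtain ⟨m, -, hm⟩ := isCompact_univ.exists_isMinOn univ_nonempty
    (((hTilc.comp (continuous_subtype_val
      : Continuous ((↑) : Metric.sphere (0:E3) 1 → E3))).norm).continuousOn)
  set c : ℝ := ‖Til (m : E3)‖ with hcdef
  have hc0 : 0 < c := norm_pos_iff.2 (hTiln0 m)
  have hcle : ∀ n : Metric.sphere (0:E3) 1, c ≤ ‖Til (n : E3)‖ := fun n => hm (mem_univ n)
  -- integrability for Fubini
  have hFint : Integrable (fun p : (Metric.sphere (0:E3) 1) × (Ioi (0:ℝ)) =>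
      G2 (p.2.1 • p.1.1)) (((volume : Measure E3).toSphere).prod (Measure.volumeIoiPow 2)) := by
    have hc2 : 0 < c^2 := by positivity
    have hdomIoi : IntegrableOn (fun r : ℝ => r^2 * (N * (r * Real.exp (-(c^2) * r^2))))
        (Ioi (0:ℝ)) := by
      exact ((cubic_gauss_int hc2).const_mul N).congr
        (Eventually.of_forall fun x => by ring)
    have hdom : Integrable (fun p : (Metric.sphere (0:E3) 1) × (Ioi (0:ℝ)) =>
        (1:ℝ) * (N * (p.2.1 * Real.exp (-(c^2) * p.2.1^2))))
        (((volume : Measure E3).toSphere).prod (Measure.volumeIoiPow 2)) :=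
      Integrable.mul_prod (integrable_const 1) (radial_integrable hdomIoi)
    apply hdom.mono'
    · exact (hG2c.comp ((continuous_subtype_val.comp continuous_snd).smul
        (continuous_subtype_val.comp continuous_fst))).aestronglyMeasurable
    · refine Eventually.of_forall fun p => ?_
      obtain ⟨n, r⟩ := p
      have hr : 0 < r.1 := r.2
      have hn1 : ‖(n : E3)‖ = 1 := mem_sphere_zero_iff_norm.mp n.2
      simp only [one_mul]
      have hval : G2 (r.1 • (n : E3))
          = N * (max (r.1 * ⟪n₀', (n : E3)⟫) 0 * Real.exp (-(r.1^2 * ‖Til (n:E3)‖^2))) := by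
        simp only [hG2def]
        rw [real_inner_smul_right, LinearMap.map_smul, norm_smul, Real.norm_eq_abs, abs_of_pos hr,
          mul_pow]
      rw [hval, Real.norm_eq_abs, abs_of_nonneg (by positivity)]
      have h1 : max (r.1 * ⟪n₀', (n : E3)⟫) 0 ≤ r.1 := by
        apply max_le ?_ hr.le
        calc r.1 * ⟪n₀', (n : E3)⟫ ≤ r.1 * (‖n₀'‖ * ‖(n : E3)‖) := by
              apply mul_le_mul_of_nonneg_left (real_inner_le_norm _ _) hr.le
          _ = r.1 := by rw [hn₀norm, hn1]; ring
      have h2 : Real.exp (-(r.1^2 * ‖Til (n:E3)‖^2)) ≤ Real.exp (-(c^2) * r.1^2) := by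
        apply Real.exp_le_exp.2
        have h3 : c^2 ≤ ‖Til (n:E3)‖^2 := by nlinarith [hcle n, hc0.le]
        have h4 : c^2 * r.1^2 ≤ ‖Til (n:E3)‖^2 * r.1^2 :=
          mul_le_mul_of_nonneg_right h3 (sq_nonneg _)
        linarith
      calc N * (max (r.1 * ⟪n₀', (n : E3)⟫) 0 * Real.exp (-(r.1^2 * ‖Til (n:E3)‖^2)))
          ≤ N * (r.1 * Real.exp (-(c^2) * r.1^2)) := by
            apply mul_le_mul_of_nonneg_left ?_ hN.le
            apply mul_le_mul h1 h2 (Real.exp_pos _).le hr.le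
        _ = N * (r.1 * Real.exp (-(c^2) * r.1^2)) := rfl
  -- polar evaluation of K
  have hPolar : ∫ x, G2 x =
      (1/2) * ∫ n, J n * max ⟪n₀', (n : E3)⟫ 0 ∂((volume : Measure E3).toSphere) := by
    rw [polar G2, integral_prod _ hFint, ← MeasureTheory.integral_const_mul]
    apply integral_congr_ae
    refine Eventually.of_forall fun n => ?_
    simp only
    rw [radial_integral (fun r => G2 (r • (n : E3)))]
    have heq : ∀ r ∈ Ioi (0:ℝ), r^2 * G2 (r • (n : E3))
        = (N * max ⟪n₀', (n : E3)⟫ 0) * (r^3 * Real.exp (-(‖Til (n:E3)‖^2) * r^2)) := by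
      intro r hr
      have hrpos : 0 < r := hr
      have hmax : max (r * ⟪n₀', (n : E3)⟫) 0 = r * max ⟪n₀', (n : E3)⟫ 0 := by
        rw [mul_max_of_nonneg _ _ hrpos.le, mul_zero]
      simp only [hG2def]
      rw [real_inner_smul_right, LinearMap.map_smul, norm_smul, Real.norm_eq_abs, abs_of_pos hrpos,
        mul_pow, hmax]
      ring
    rw [setIntegral_congr_fun measurableSet_Ioi heq, MeasureTheory.integral_const_mul,
      cubic_gauss (pow_pos (norm_pos_iff.2 (hTiln0 n)) 2), hJval n]
    have hd : ‖Til (n:E3)‖ ≠ 0 := norm_ne_zero_iff.2 (hTiln0 n)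
    rw [show ‖Til (n:E3)‖^4 = (‖Til (n:E3)‖^2)^2 by ring]
    field_simp
  -- change of variables evaluation of K
  have hdetTl : LinearMap.det Tl = T.det := det_toEuclideanLin T
  have hdetTl0 : LinearMap.det Tl ≠ 0 := by rw [hdetTl]; exact hdet
  have hCov : ∫ x, G2 x = |T.det| * (N * (π/2 * ‖v‖)) := by
    rw [cov Tl hdetTl0 G2 hG2c.aestronglyMeasurable, hdetTl]
    congr 1
    have heq : ∀ y : E3, G2 (Tl y) = N * (max ⟪v, y⟫ 0 * Real.exp (-‖y‖^2)) := by
      intro y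
      simp only [hG2def]
      rw [hTilTl y, inner_toEuclideanLin_symm T hTsymm]
    simp_rw [heq]
    rw [MeasureTheory.integral_const_mul]
    congr 1
    have := appA v
    simp_rw [mul_comm (max _ _) (Real.exp _)] at this ⊢
    rw [← this]
  -- combine
  have hI : ⟪n₀', b n₀⟫ = π * N * |T.det| * ‖v‖ := by
    rw [hInner]
    have h2 := hPolar.symm.trans hCov
    calc (∫ n, J n * max ⟪n₀', (n : E3)⟫ 0 ∂((volume : Measure E3).toSphere))
        = 2 * ((1/2) * ∫ n, J n * max ⟪n₀', (n : E3)⟫ 0 ∂((volume : Measure E3).toSphere)) := by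
          ring
      _ = 2 * (|T.det| * (N * (π/2 * ‖v‖))) := by rw [h2]
      _ = π * N * |T.det| * ‖v‖ := by ring
  rw [hTnorm, hI]
  field_simp
end
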